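/- arXiv:2511.19499 — 2 statements merged into one kernel-verified Lean document; each statement's English description precedes it below -/
import Mathlib

section
/- (GAN value function upper bound) For any measurable discriminator D: X → (0,1), the GAN value V(D) = E_{x~p}[log D(x)] + E_{x~g}[log(1-D(x))] satisfies V(D) ≤ 2 D_JS(p ‖ g) - 2 log 2, with equality if and only if D(x) = p(x)/(p(x)+g(x)) for μ-almost every x. -/
open MeasureTheory Set Real

lemma xlog_ge {x y : ℝ} (hx : 0 ≤ x) (hy : 0 < y) : x - y ≤ x * Real.log (x / y) := by
  rcases hx.eq_or_lt with h | h
  · simp [← h]; linarith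
  · have h1 : Real.log (y / x) ≤ y / x - 1 := Real.log_le_sub_one_of_pos (by positivity)
    have h2 : Real.log (x / y) = - Real.log (y / x) := by
      rw [← Real.log_inv, inv_div]
    have h3 : x * (y / x) = y := by field_simp
    rw [h2]
    nlinarith [mul_le_mul_of_nonneg_left h1 h.le]

lemma xlog_gt {x y : ℝ} (hx : 0 ≤ x) (hy : 0 < y) (hne : x ≠ y) :
    x - y < x * Real.log (x / y) := by
  rcases hx.eq_or_lt with h | h
  · simp [← h]; linarith
  · have hne1 : y / x ≠ 1 := by
      intro hc
      exact hne ((div_eq_one_iff_eq h.ne').mp hc).symm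
    have h1 : Real.log (y / x) < y / x - 1 :=
      Real.log_lt_sub_one_of_pos (by positivity) hne1
    have h2 : Real.log (x / y) = - Real.log (y / x) := by
      rw [← Real.log_inv, inv_div]
    have h3 : x * (y / x) = y := by field_simp
    rw [h2]
    nlinarith [mul_lt_mul_of_pos_left h1 h]

lemma phi_key (a b d : ℝ) (ha : 0 ≤ a) (hb : 0 ≤ b) (hd0 : 0 < d) (hd1 : d < 1) :
    0 ≤ a * (Real.log (a / ((a + b) / 2)) - Real.log d - Real.log 2)
      + b * (Real.log (b / ((a + b) / 2)) - Real.log (1 - d) - Real.log 2) ∧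
    (a * (Real.log (a / ((a + b) / 2)) - Real.log d - Real.log 2)
      + b * (Real.log (b / ((a + b) / 2)) - Real.log (1 - d) - Real.log 2) = 0 ↔
      (0 < a + b → d = a / (a + b))) := by
  have hs : 0 ≤ a + b := add_nonneg ha hb
  rcases hs.eq_or_lt with hs0 | hs0
  · have ha0 : a = 0 := by linarith
    have hb0 : b = 0 := by linarith
    constructor
    · simp [ha0, hb0]
    · constructor
      · intro _ hpos; rw [← hs0] at hpos; exact absurd hpos (lt_irrefl 0)
      · intro _; simp [ha0, hb0]
  · have hd1' : 0 < 1 - d := by linarith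
    have hT1 : a * (Real.log (a / ((a + b) / 2)) - Real.log d - Real.log 2)
        = a * Real.log (a / ((a + b) * d)) := by
      rcases ha.eq_or_lt with h | h
      · simp [← h]
      · rw [Real.log_div h.ne' (by positivity), Real.log_div h.ne' (by positivity),
          Real.log_div (by positivity) two_ne_zero, Real.log_mul hs0.ne' hd0.ne']
        ring
    have hT2 : b * (Real.log (b / ((a + b) / 2)) - Real.log (1 - d) - Real.log 2)
        = b * Real.log (b / ((a + b) * (1 - d))) := by
      rcases hb.eq_or_lt with h | h
      · simp [← h]
      · rw [Real.log_div h.ne' (by positivity), Real.log_div h.ne' (by positivity),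
          Real.log_div (by positivity) two_ne_zero, Real.log_mul hs0.ne' hd1'.ne']
        ring
    rw [hT1, hT2]
    have hy1 : 0 < (a + b) * d := by positivity
    have hy2 : 0 < (a + b) * (1 - d) := by positivity
    have h1 : a - (a + b) * d ≤ a * Real.log (a / ((a + b) * d)) := xlog_ge ha hy1
    have h2 : b - (a + b) * (1 - d) ≤ b * Real.log (b / ((a + b) * (1 - d))) := xlog_ge hb hy2
    have hzero : (a - (a + b) * d) + (b - (a + b) * (1 - d)) = 0 := by ring
    refine ⟨by linarith, ?_, ?_⟩
    · intro heq _
      by_contra hne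
      have hne' : a ≠ (a + b) * d := by
        intro hc
        exact hne (by field_simp [hs0.ne']; linarith)
      have h1' : a - (a + b) * d < a * Real.log (a / ((a + b) * d)) := xlog_gt ha hy1 hne'
      linarith
    · intro hd'
      have hdv : d = a / (a + b) := hd' hs0
      have hA : (a + b) * d = a := by rw [hdv]; field_simp
      have hB : (a + b) * (1 - d) = b := by rw [mul_sub, mul_one, hA]; ring
      rw [hA, hB]
      have e1 : a * Real.log (a / a) = 0 := by
        rcases ha.eq_or_lt with h | h
        · simp [← h]
        · simp [div_self h.ne']
      have e2 : b * Real.log (b / b) = 0 := by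
        rcases hb.eq_or_lt with h | h
        · simp [← h]
        · simp [div_self h.ne']
      linarith

/-- GAN value function upper bound: for any discriminator D with values in (0,1),
V(D) ≤ 2·D_JS(p‖g) - 2 log 2, with equality iff D = p/(p+g) a.e. (on the
support of p+g). -/
theorem gan_value_upper_bound {X : Type*} [MeasurableSpace X] (μ : Measure X)
    [SigmaFinite μ]
    (p g D : X → ℝ)
    (hp_meas : Measurable p) (hg_meas : Measurable g) (hD_meas : Measurable D)
    (hp_nonneg : ∀ x, 0 ≤ p x) (hg_nonneg : ∀ x, 0 ≤ g x)
    (hp_prob : ∫ x, p x ∂μ = 1) (hg_prob : ∫ x, g x ∂μ = 1)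
    (hD : ∀ x, D x ∈ Ioo (0:ℝ) 1)
    (hV1 : Integrable (fun x => p x * Real.log (D x)) μ)
    (hV2 : Integrable (fun x => g x * Real.log (1 - D x)) μ)
    (hKL1 : Integrable (fun x => p x * Real.log (p x / ((p x + g x) / 2))) μ)
    (hKL2 : Integrable (fun x => g x * Real.log (g x / ((p x + g x) / 2))) μ) :
    ((∫ x, p x * Real.log (D x) ∂μ) + (∫ x, g x * Real.log (1 - D x) ∂μ) ≤
      2 * ((1/2) * ∫ x, p x * Real.log (p x / ((p x + g x) / 2)) ∂μ +
           (1/2) * ∫ x, g x * Real.log (g x / ((p x + g x) / 2)) ∂μ)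
        - 2 * Real.log 2) ∧
    (((∫ x, p x * Real.log (D x) ∂μ) + (∫ x, g x * Real.log (1 - D x) ∂μ) =
      2 * ((1/2) * ∫ x, p x * Real.log (p x / ((p x + g x) / 2)) ∂μ +
           (1/2) * ∫ x, g x * Real.log (g x / ((p x + g x) / 2)) ∂μ)
        - 2 * Real.log 2) ↔
      (∀ᵐ x ∂μ, 0 < p x + g x → D x = p x / (p x + g x))) := by
  -- integrability of p and g
  have hp_int : Integrable p μ := by
    by_contra h
    rw [integral_undef h] at hp_prob
    norm_num at hp_prob
  have hg_int : Integrable g μ := by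
    by_contra h
    rw [integral_undef h] at hg_prob
    norm_num at hg_prob
  set f : X → ℝ := fun x =>
    p x * (Real.log (p x / ((p x + g x) / 2)) - Real.log (D x) - Real.log 2)
      + g x * (Real.log (g x / ((p x + g x) / 2)) - Real.log (1 - D x) - Real.log 2)
    with hf_def
  have hkey : ∀ x, 0 ≤ f x ∧ (f x = 0 ↔ (0 < p x + g x → D x = p x / (p x + g x))) :=
    fun x => phi_key (p x) (g x) (D x) (hp_nonneg x) (hg_nonneg x) (hD x).1 (hD x).2
  have i1 : Integrable (fun x =>
      p x * Real.log (p x / ((p x + g x) / 2)) - p x * Real.log (D x) - p x * Real.log 2) μ :=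
    (hKL1.sub hV1).sub (hp_int.mul_const _)
  have i2 : Integrable (fun x =>
      g x * Real.log (g x / ((p x + g x) / 2)) - g x * Real.log (1 - D x) - g x * Real.log 2) μ :=
    (hKL2.sub hV2).sub (hg_int.mul_const _)
  have hf_int : Integrable f μ :=
    (i1.add i2).congr (Filter.Eventually.of_forall fun x => by
      simp only [Pi.add_apply, hf_def]; ring)
  have hint : ∫ x, f x ∂μ =
      (∫ x, p x * Real.log (p x / ((p x + g x) / 2)) ∂μ)
        - (∫ x, p x * Real.log (D x) ∂μ) - Real.log 2
      + ((∫ x, g x * Real.log (g x / ((p x + g x) / 2)) ∂μ)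
        - (∫ x, g x * Real.log (1 - D x) ∂μ) - Real.log 2) := by
    have h1 : ∫ x, f x ∂μ = ∫ x,
        ((p x * Real.log (p x / ((p x + g x) / 2)) - p x * Real.log (D x) - p x * Real.log 2)
          + (g x * Real.log (g x / ((p x + g x) / 2)) - g x * Real.log (1 - D x)
              - g x * Real.log 2)) ∂μ :=
      integral_congr_ae (Filter.Eventually.of_forall fun x => by simp only [hf_def]; ring)
    have i1a : Integrable (fun x =>
        p x * Real.log (p x / ((p x + g x) / 2)) - p x * Real.log (D x)) μ := hKL1.sub hV1
    have i1b : Integrable (fun x => p x * Real.log 2) μ := hp_int.mul_const _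
    have i2a : Integrable (fun x =>
        g x * Real.log (g x / ((p x + g x) / 2)) - g x * Real.log (1 - D x)) μ := hKL2.sub hV2
    have i2b : Integrable (fun x => g x * Real.log 2) μ := hg_int.mul_const _
    rw [h1, integral_add i1 i2, integral_sub i1a i1b, integral_sub hKL1 hV1,
      integral_sub i2a i2b, integral_sub hKL2 hV2,
      integral_mul_const, integral_mul_const, hp_prob, hg_prob, one_mul]
  have hnn : 0 ≤ ∫ x, f x ∂μ := integral_nonneg fun x => (hkey x).1
  constructor
  · linarith [hnn, hint]
  · have hiff : ∫ x, f x ∂μ = 0 ↔ f =ᵐ[μ] 0 :=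
      integral_eq_zero_iff_of_nonneg (fun x => (hkey x).1) hf_int
    constructor
    · intro heq
      have hfz : ∫ x, f x ∂μ = 0 := by linarith [hint]
      filter_upwards [hiff.mp hfz] with x hx
      exact ((hkey x).2.mp hx)
    · intro hae
      have hfz : f =ᵐ[μ] 0 := by
        filter_upwards [hae] with x hx
        exact (hkey x).2.mpr hx
      have := hiff.mpr hfz
      linarith [hint]
end

section
/- (Value of optimal discriminator) With the optimal discriminator D*(x) = p(x)/(p(x)+g(x)), the GAN value function equals V(D*) = 2 D_JS(p ‖ g) - 2 log 2. -/
open MeasureTheory Real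

lemma kl_split {X : Type*} [MeasurableSpace X] (μ : Measure X)
    (p g : X → ℝ) (hp_nonneg : ∀ x, 0 ≤ p x) (hg_nonneg : ∀ x, 0 ≤ g x)
    (hp_int : Integrable p μ)
    (hV1 : Integrable (fun x => p x * Real.log (p x / (p x + g x))) μ) :
    ∫ x, p x * Real.log (p x / ((p x + g x) / 2)) ∂μ =
      (∫ x, p x * Real.log (p x / (p x + g x)) ∂μ) + (∫ x, p x ∂μ) * Real.log 2 := by
  have heq : ∀ x, p x * Real.log (p x / ((p x + g x) / 2)) =
      p x * Real.log (p x / (p x + g x)) + p x * Real.log 2 := by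
    intro x
    rcases eq_or_lt_of_le (hp_nonneg x) with h | h
    · simp [← h]
    · have hsum : 0 < p x + g x := by linarith [hg_nonneg x]
      have h1 : p x / ((p x + g x) / 2) = (p x / (p x + g x)) * 2 := by
        field_simp
      rw [h1, Real.log_mul (by positivity) two_ne_zero]
      ring
  rw [show (fun x => p x * Real.log (p x / ((p x + g x) / 2))) =
      fun x => p x * Real.log (p x / (p x + g x)) + p x * Real.log 2 from funext heq]
  rw [integral_add hV1 (hp_int.mul_const _), integral_mul_const]

/-- Value of the optimal discriminator D*(x) = p(x)/(p(x)+g(x)):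
V(D*) = 2·D_JS(p‖g) - 2 log 2. -/
theorem gan_value_optimal_discriminator {X : Type*} [MeasurableSpace X]
    (μ : Measure X) [SigmaFinite μ]
    (p g : X → ℝ)
    (hp_meas : Measurable p) (hg_meas : Measurable g)
    (hp_nonneg : ∀ x, 0 ≤ p x) (hg_nonneg : ∀ x, 0 ≤ g x)
    (hp_prob : ∫ x, p x ∂μ = 1) (hg_prob : ∫ x, g x ∂μ = 1)
    (hV1 : Integrable (fun x => p x * Real.log (p x / (p x + g x))) μ)
    (hV2 : Integrable (fun x => g x * Real.log (g x / (p x + g x))) μ)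
    (hKL1 : Integrable (fun x => p x * Real.log (p x / ((p x + g x) / 2))) μ)
    (hKL2 : Integrable (fun x => g x * Real.log (g x / ((p x + g x) / 2))) μ) :
    (∫ x, p x * Real.log (p x / (p x + g x)) ∂μ) +
      (∫ x, g x * Real.log (g x / (p x + g x)) ∂μ) =
    2 * ((1/2) * ∫ x, p x * Real.log (p x / ((p x + g x) / 2)) ∂μ +
         (1/2) * ∫ x, g x * Real.log (g x / ((p x + g x) / 2)) ∂μ)
      - 2 * Real.log 2 := by
  have hp_int : Integrable p μ := by
    by_contra h
    rw [integral_undef h] at hp_prob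
    norm_num at hp_prob
  have hg_int : Integrable g μ := by
    by_contra h
    rw [integral_undef h] at hg_prob
    norm_num at hg_prob
  have h1 := kl_split μ p g hp_nonneg hg_nonneg hp_int hV1
  have h2 := kl_split μ g p hg_nonneg hp_nonneg hg_int (by
    simpa [add_comm (p _) (g _)] using hV2)
  simp only [add_comm (g _) (p _)] at h2
  rw [h1, h2, hp_prob, hg_prob]
  ring
end
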